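/- arXiv:1603.00544 — 2 statements merged into one kernel-verified Lean document; each statement's English description precedes it below -/
import Mathlib

section
/- Let Y be a random variable taking values in a countable set, distributed with pmf p, and let q be another pmf with q(y) > 0 whenever p(y) > 0. Let A be an event with p(A) ∈ (0,1), and suppose p(A) ≥ 1 − δ and q(A) ≤ δ for δ ∈ (0, 1/2). Then E_p[ ln(p(Y)/q(Y)) ] ≥ (1 − δ) ln((1−δ)/δ) − e^{−1}. (Proof sketch: condition on A and its complement, apply Jensen's inequality to −ln of the conditional expectation of q/p on each event, use the change-of-measure identity, and bound the complement term via x ln x ≥ −1/e.) -/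
open scoped Classical

lemma mul_log_ge_neg_inv_exp {x : ℝ} (hx : 0 < x) :
    -(Real.exp 1)⁻¹ ≤ x * Real.log x := by
  have h := Real.add_one_le_exp (-Real.log x - 1)
  have hexp : Real.exp (-Real.log x - 1) = x⁻¹ * (Real.exp 1)⁻¹ := by
    rw [Real.exp_sub, Real.exp_neg, Real.exp_log hx, div_eq_mul_inv]
  rw [hexp] at h
  have h2 := mul_le_mul_of_nonneg_left h hx.le
  have h3 : x * (x⁻¹ * (Real.exp 1)⁻¹) = (Real.exp 1)⁻¹ := by
    field_simp
  nlinarith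

lemma ptwise {p q c d : ℝ} (hp : 0 ≤ p) (hq : 0 ≤ q) (hpq : 0 < p → 0 < q)
    (hc : 0 < c) (hd : 0 < d) :
    p * Real.log (c / d) + p - q * (c / d) ≤ p * Real.log (p / q) := by
  rcases hp.eq_or_lt with h | h
  · have h1 : 0 ≤ q * (c / d) := by positivity
    simp [← h]
    linarith
  · have hq' := hpq h
    have hlog : Real.log (q * c / (p * d)) ≤ q * c / (p * d) - 1 :=
      Real.log_le_sub_one_of_pos (by positivity)
    have e1 : Real.log (q * c / (p * d))
        = Real.log q + Real.log c - (Real.log p + Real.log d) := by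
      rw [Real.log_div (by positivity) (by positivity),
        Real.log_mul hq'.ne' hc.ne', Real.log_mul h.ne' hd.ne']
    have e2 : Real.log (c / d) = Real.log c - Real.log d :=
      Real.log_div hc.ne' hd.ne'
    have e3 : Real.log (p / q) = Real.log p - Real.log q :=
      Real.log_div h.ne' hq'.ne'
    rw [e1] at hlog
    have h2 := mul_le_mul_of_nonneg_left hlog h.le
    have h3 : p * (q * c / (p * d)) = q * (c / d) := by
      field_simp
    rw [e2, e3]
    nlinarith

lemma sum_bound {Y : Type*} [Fintype Y] (S : Finset Y) (p q : Y → ℝ)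
    (hp0 : ∀ y, 0 ≤ p y) (hq0 : ∀ y, 0 ≤ q y) (hsupp : ∀ y, 0 < p y → 0 < q y)
    (ha : 0 < ∑ y ∈ S, p y) (hb : 0 < ∑ y ∈ S, q y) :
    (∑ y ∈ S, p y) * Real.log ((∑ y ∈ S, p y) / (∑ y ∈ S, q y))
      ≤ ∑ y ∈ S, p y * Real.log (p y / q y) := by
  set a := ∑ y ∈ S, p y with ha'
  set b := ∑ y ∈ S, q y with hb'
  have key : ∀ y ∈ S, p y * Real.log (a / b) + p y - q y * (a / b)
      ≤ p y * Real.log (p y / q y) :=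
    fun y _ => ptwise (hp0 y) (hq0 y) (hsupp y) ha hb
  have hs := Finset.sum_le_sum key
  have hsum : ∑ y ∈ S, (p y * Real.log (a / b) + p y - q y * (a / b))
      = a * Real.log (a / b) + a - b * (a / b) := by
    rw [Finset.sum_sub_distrib, Finset.sum_add_distrib, ← Finset.sum_mul, ← Finset.sum_mul]
  have hba : b * (a / b) = a := by field_simp
  rw [hsum, hba] at hs
  linarith

theorem expected_log_likelihood_lower_bound
    {Y : Type*} [Fintype Y] (p q : Y → ℝ) (A : Set Y)
    (hp0 : ∀ y, 0 ≤ p y) (hp1 : ∑ y, p y = 1)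
    (hq0 : ∀ y, 0 ≤ q y) (hq1 : ∑ y, q y = 1)
    (hsupp : ∀ y, 0 < p y → 0 < q y)
    (δ : ℝ) (hδ : δ ∈ Set.Ioo (0 : ℝ) (1/2))
    (hpA : (∑ y, if y ∈ A then p y else 0) ∈ Set.Ioo (0 : ℝ) 1)
    (hpA' : 1 - δ ≤ ∑ y, if y ∈ A then p y else 0)
    (hqA : (∑ y, if y ∈ A then q y else 0) ≤ δ) :
    (1 - δ) * Real.log ((1 - δ) / δ) - (Real.exp 1)⁻¹
      ≤ ∑ y, p y * Real.log (p y / q y) := by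
  obtain ⟨hδ0, hδ2⟩ := hδ
  set S : Finset Y := Finset.univ.filter (· ∈ A) with hS
  set T : Finset Y := Finset.univ.filter (fun y => ¬ y ∈ A) with hT
  have hfilt : ∀ f : Y → ℝ, (∑ y, if y ∈ A then f y else 0) = ∑ y ∈ S, f y := by
    intro f; rw [Finset.sum_filter]
  rw [hfilt] at hpA hpA' hqA
  set a := ∑ y ∈ S, p y with ha'
  set b := ∑ y ∈ S, q y with hb'
  obtain ⟨ha0, ha1⟩ := hpA
  -- b > 0
  have hb0 : 0 < b := by
    obtain ⟨y, hyS, hy⟩ : ∃ y ∈ S, 0 < p y := by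
      by_contra hcon
      push_neg at hcon
      have : a ≤ 0 := Finset.sum_nonpos hcon
      linarith
    exact lt_of_lt_of_le (hsupp y hy) (Finset.single_le_sum (fun i _ => hq0 i) hyS)
  -- split the total sums
  have hsplitp : (∑ y ∈ S, p y) + (∑ y ∈ T, p y) = 1 := by
    rw [← hp1]; exact Finset.sum_filter_add_sum_filter_not _ _ _
  have hsplitq : (∑ y ∈ S, q y) + (∑ y ∈ T, q y) = 1 := by
    rw [← hq1]; exact Finset.sum_filter_add_sum_filter_not _ _ _
  have hsplit : (∑ y, p y * Real.log (p y / q y))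
      = (∑ y ∈ S, p y * Real.log (p y / q y)) + (∑ y ∈ T, p y * Real.log (p y / q y)) :=
    (Finset.sum_filter_add_sum_filter_not _ _ _).symm
  have haT : (∑ y ∈ T, p y) = 1 - a := by linarith
  have hbT : (∑ y ∈ T, q y) = 1 - b := by linarith
  have hbδ : b ≤ δ := hqA
  have haT0 : 0 < (1 - a) := by linarith
  have hbT0 : 0 < (1 - b) := by linarith
  -- apply sum_bound on S and T
  have h1 : a * Real.log (a / b) ≤ ∑ y ∈ S, p y * Real.log (p y / q y) :=
    sum_bound S p q hp0 hq0 hsupp ha0 hb0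
  have h2 : (1 - a) * Real.log ((1 - a) / (1 - b))
      ≤ ∑ y ∈ T, p y * Real.log (p y / q y) := by
    have := sum_bound T p q hp0 hq0 hsupp (by rw [haT]; exact haT0) (by rw [hbT]; exact hbT0)
    rwa [haT, hbT] at this
  -- bound the S term
  have hlog1 : Real.log ((1 - δ) / δ) ≤ Real.log (a / b) := by
    apply Real.log_le_log (div_pos (by linarith) hδ0)
    apply div_le_div₀ (by linarith) hpA' hb0 hbδ
  have hlognn : 0 ≤ Real.log ((1 - δ) / δ) := by
    apply Real.log_nonneg
    rw [le_div_iff₀ hδ0]; linarith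
  have hb1 : (1 - δ) * Real.log ((1 - δ) / δ) ≤ a * Real.log (a / b) := by
    apply mul_le_mul hpA' hlog1 hlognn (by linarith)
  -- bound the T term
  have hb2 : -(Real.exp 1)⁻¹ ≤ (1 - a) * Real.log ((1 - a) / (1 - b)) := by
    have hx := mul_log_ge_neg_inv_exp haT0
    have hlb : Real.log (1 - a) ≤ Real.log ((1 - a) / (1 - b)) := by
      rw [Real.log_div haT0.ne' hbT0.ne']
      have : Real.log (1 - b) ≤ 0 := Real.log_nonpos (by linarith) (by linarith)
      linarith
    nlinarith [mul_le_mul_of_nonneg_left hlb haT0.le]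
  rw [hsplit]
  linarith
end

section
/- Variant of the Arzelà–Ascoli theorem: Fix T > 0 and c > 0. Let {f_s}_{s∈ℕ} be a sequence of functions from [0,T] to ℝ such that (1) sup_s |f_s(0)| < ∞, and (2) there exists a sequence ε_s → 0 with |f_s(a) − f_s(b)| ≤ c|a − b| + ε_s for all a, b ∈ [0,T] and all s. Then there exists a c-Lipschitz function f* : [0,T] → ℝ and a strictly increasing sequence (s_j) such that sup_{t∈[0,T]} |f_{s_j}(t) − f*(t)| → 0 as j → ∞. -/
open Filter Set
open scoped BoundedContinuousFunction

theorem arzela_ascoli_variant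
    (T c : ℝ) (hT : 0 < T) (hc : 0 < c) (f : ℕ → ℝ → ℝ)
    (hbdd : ∃ C : ℝ, ∀ s, |f s 0| ≤ C)
    (ε : ℕ → ℝ) (hε0 : ∀ s, 0 ≤ ε s) (hε : Tendsto ε atTop (nhds 0))
    (hlip : ∀ s, ∀ a ∈ Icc (0 : ℝ) T, ∀ b ∈ Icc (0 : ℝ) T,
      |f s a - f s b| ≤ c * |a - b| + ε s) :
    ∃ fstar : ℝ → ℝ,
      (∀ a ∈ Icc (0 : ℝ) T, ∀ b ∈ Icc (0 : ℝ) T, |fstar a - fstar b| ≤ c * |a - b|)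
      ∧ ∃ s : ℕ → ℕ, StrictMono s ∧
          ∀ η > (0 : ℝ), ∃ J : ℕ, ∀ j ≥ J, ∀ t ∈ Icc (0 : ℝ) T,
            |f (s j) t - fstar t| ≤ η := by
  classical
  obtain ⟨C, hC⟩ := hbdd
  obtain ⟨E, hE⟩ : ∃ E : ℝ, ∀ s, ε s ≤ E := by
    obtain ⟨E, hE⟩ := hε.bddAbove_range
    exact ⟨E, fun s => hE ⟨s, rfl⟩⟩
  have hE0 : (0:ℝ) ≤ E := le_trans (hε0 0) (hE 0)
  haveI : Nonempty ↥(Icc (0:ℝ) T) := ⟨⟨0, le_refl 0, hT.le⟩⟩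
  set I := Icc (0:ℝ) T with hI
  -- uniform bound on f on the interval
  have hfb : ∀ s, ∀ t ∈ I, |f s t| ≤ C + c * T + E := by
    intro s t ht
    have h1 : |f s t - f s 0| ≤ c * |t - 0| + ε s :=
      hlip s t ht 0 ⟨le_refl 0, hT.le⟩
    have h2 : |t - 0| ≤ T := by
      rw [sub_zero, abs_of_nonneg ht.1]; exact ht.2
    calc |f s t| ≤ |f s t - f s 0| + |f s 0| := by
          have := abs_sub_abs_le_abs_sub (f s t) (f s 0); linarith [abs_sub_abs_le_abs_sub (f s t) (f s 0)]
      _ ≤ (c * |t - 0| + ε s) + C := add_le_add h1 (hC s)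
      _ ≤ C + c * T + E := by
          have := mul_le_mul_of_nonneg_left h2 hc.le
          have := hE s
          linarith
  -- the Lipschitz regularization
  set g : ℕ → ↥I → ℝ := fun s x => ⨅ u : ↥I, (f s u + c * |x.1 - u.1|) with hg
  have hbb : ∀ s (x : ↥I), BddBelow (Set.range fun u : ↥I => f s u + c * |x.1 - u.1|) := by
    intro s x
    refine ⟨f s x - ε s, ?_⟩
    rintro _ ⟨u, rfl⟩
    show f s x.1 - ε s ≤ f s u.1 + c * |x.1 - u.1|
    have h1 := hlip s x.1 x.2 u.1 u.2
    have h2 := abs_le.1 h1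
    linarith [h2.1, h2.2]
  have hle : ∀ s (x : ↥I), g s x ≤ f s x := by
    intro s x
    have := ciInf_le (hbb s x) x
    simpa using this
  have hge : ∀ s (x : ↥I), f s x - ε s ≤ g s x := by
    intro s x
    refine le_ciInf fun u => ?_
    have h1 := hlip s x.1 x.2 u.1 u.2
    have h2 := abs_le.1 h1
    linarith [h2.1, h2.2]
  have hlipg : ∀ s (x y : ↥I), g s x ≤ g s y + c * |x.1 - y.1| := by
    intro s x y
    have : g s x - c * |x.1 - y.1| ≤ g s y := by
      refine le_ciInf fun u => ?_
      have h1 : g s x ≤ f s u + c * |x.1 - u.1| := ciInf_le (hbb s x) u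
      have h2 : |x.1 - u.1| ≤ |y.1 - u.1| + |x.1 - y.1| := by
        have := abs_sub_le x.1 y.1 u.1
        linarith [abs_sub_le x.1 y.1 u.1]
      nlinarith [mul_le_mul_of_nonneg_left h2 hc.le]
    linarith
  have hlipg' : ∀ s (x y : ↥I), |g s x - g s y| ≤ c * |x.1 - y.1| := by
    intro s x y
    rw [abs_sub_le_iff]
    constructor
    · have := hlipg s x y; linarith
    · have := hlipg s y x
      rw [abs_sub_comm y.1 x.1] at this; linarith
  have hgb : ∀ s (x : ↥I), |g s x| ≤ C + c * T + E + E := by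
    intro s x
    rw [abs_le]
    constructor
    · have := hge s x
      have := (abs_le.1 (hfb s x.1 x.2)).1
      have := hE s
      linarith
    · have := hle s x
      have := (abs_le.1 (hfb s x.1 x.2)).2
      have := hε0 s
      linarith
  set M := C + c * T + E + E with hM
  -- continuous / bounded versions
  have hcont : ∀ s, Continuous (g s) := by
    intro s
    refine (LipschitzWith.of_dist_le_mul (K := c.toNNReal) fun x y => ?_).continuous
    rw [Subtype.dist_eq, Real.dist_eq, Real.dist_eq, Real.coe_toNNReal c hc.le]
    exact hlipg' s x y
  set G : ℕ → (↥I →ᵇ ℝ) := fun s =>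
    BoundedContinuousFunction.mkOfCompact ⟨g s, hcont s⟩ with hG
  have hGval : ∀ s (x : ↥I), G s x = g s x := fun s x => rfl
  -- Arzelà–Ascoli
  have hcomp : IsCompact (closure (Set.range G)) := by
    refine BoundedContinuousFunction.arzela_ascoli (Icc (-M) M) isCompact_Icc (Set.range G) ?_ ?_
    · rintro h x ⟨s, rfl⟩
      exact abs_le.1 (hgb s x)
    · refine Metric.equicontinuous_of_continuity_modulus (fun d => c * d) ?_ _ ?_
      · have : Continuous fun d : ℝ => c * d := continuous_const.mul continuous_id
        simpa using this.tendsto 0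
      · rintro x y ⟨h, s, rfl⟩
        rw [Real.dist_eq, Subtype.dist_eq, Real.dist_eq]
        exact hlipg' s x y
  obtain ⟨F, _, φ, hφ, hconv⟩ :=
    hcomp.tendsto_subseq (x := G) (fun n => subset_closure ⟨n, rfl⟩)
  -- pointwise convergence
  have hpt : ∀ x : ↥I, Tendsto (fun j => G (φ j) x) atTop (nhds (F x)) := by
    intro x
    exact ((continuous_eval_const (F := ↥I →ᵇ ℝ) x).tendsto F).comp hconv
  refine ⟨fun t => F (Set.projIcc 0 T hT.le t), ?_, φ, hφ, ?_⟩
  · intro a ha b hb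
    simp only [Set.projIcc_of_mem hT.le ha, Set.projIcc_of_mem hT.le hb]
    have hT2 : Tendsto (fun j => |G (φ j) ⟨a, ha⟩ - G (φ j) ⟨b, hb⟩|) atTop
        (nhds |F ⟨a, ha⟩ - F ⟨b, hb⟩|) := ((hpt ⟨a, ha⟩).sub (hpt ⟨b, hb⟩)).abs
    exact le_of_tendsto hT2 (Filter.Eventually.of_forall fun j => hlipg' (φ j) ⟨a, ha⟩ ⟨b, hb⟩)
  · intro η hη
    have hφtop : Tendsto φ atTop atTop := hφ.tendsto_atTop
    have h1 : ∀ᶠ j in atTop, ε (φ j) < η / 2 :=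
      (hε.comp hφtop).eventually (eventually_lt_nhds (by linarith) )
    have h2 : ∀ᶠ j in atTop, dist (G (φ j)) F < η / 2 :=
      Metric.tendsto_nhds.mp hconv (η / 2) (by linarith)
    obtain ⟨J, hJ⟩ := Filter.eventually_atTop.1 (h1.and h2)
    refine ⟨J, fun j hj t ht => ?_⟩
    obtain ⟨hε', hd'⟩ := hJ j hj
    simp only [Set.projIcc_of_mem hT.le ht]
    set x : ↥I := ⟨t, ht⟩ with hx
    have e1 : |f (φ j) t - g (φ j) x| ≤ ε (φ j) := by
      rw [abs_le]
      constructor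
      · have := hle (φ j) x; have := hε0 (φ j); simp only [hx]; linarith
      · have := hge (φ j) x; simp only [hx]; linarith
    have e2 : |g (φ j) x - F x| ≤ dist (G (φ j)) F := by
      have := BoundedContinuousFunction.dist_coe_le_dist (f := G (φ j)) (g := F) x
      rwa [Real.dist_eq] at this
    calc |f (φ j) t - F x| ≤ |f (φ j) t - g (φ j) x| + |g (φ j) x - F x| := by
          have := abs_sub_le (f (φ j) t) (g (φ j) x) (F x); linarith
      _ ≤ ε (φ j) + dist (G (φ j)) F := add_le_add e1 e2
      _ ≤ η := by linarith
end
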